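/- Suppose h, d, n are positive integers with n coprime to d·h, and f_1, …, f_R are arithmetic functions each supported on prime powers. Then (μ ⋆ f_1 ⋆ ⋯ ⋆ f_R)(dhn) = ∑ over ways to split {1,…,R} into a set S (the indices i with the variable ℓ_i dividing dh) and its complement, of (μ ⋆ f_{i_1} ⋆ ⋯ ⋆ f_{i_s})(dh) · (μ ⋆ f_{i_{s+1}} ⋆ ⋯ ⋆ f_{i_R})(n), where (i_1,…,i_s) enumerates S and (i_{s+1},…,i_R) its complement. -/

import Mathlib

open ArithmeticFunction Finset

private lemma mul_apply_of_coprime (f g : ArithmeticFunction ℝ) {m n : ℕ}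
    (cop : Nat.Coprime m n) :
    (f * g) (m * n) =
      ∑ p ∈ m.divisorsAntidiagonal ×ˢ n.divisorsAntidiagonal,
        f (p.1.1 * p.2.1) * g (p.1.2 * p.2.2) := by
  rw [mul_apply]
  symm
  apply sum_nbij fun ((i, j), k, l) ↦ (i * k, j * l)
  · rintro ⟨⟨a1, a2⟩, ⟨b1, b2⟩⟩ h
    simp only [Nat.mem_divisorsAntidiagonal, Ne, mem_product] at h
    rcases h with ⟨⟨rfl, ha⟩, ⟨rfl, hb⟩⟩
    simp only [Nat.mem_divisorsAntidiagonal, Nat.mul_eq_zero, Ne]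
    constructor
    · ring
    rw [Nat.mul_eq_zero] at *
    exact not_or_intro ha hb
  · simp only [Set.InjOn, mem_coe, Nat.mem_divisorsAntidiagonal, Ne, mem_product,
      Prod.mk.injEq]
    rintro ⟨⟨a1, a2⟩, ⟨b1, b2⟩⟩ ⟨⟨rfl, ha⟩, ⟨rfl, hb⟩⟩ ⟨⟨c1, c2⟩, ⟨d1, d2⟩⟩ hcd h
    simp only [Prod.mk.injEq] at h
    ext <;> dsimp only
    · trans Nat.gcd (a1 * a2) (a1 * b1)
      · rw [Nat.gcd_mul_left, cop.coprime_mul_left.coprime_mul_right_right.gcd_eq_one, mul_one]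
      · rw [← hcd.1.1, ← hcd.2.1] at cop
        rw [← hcd.1.1, h.1, Nat.gcd_mul_left,
          cop.coprime_mul_left.coprime_mul_right_right.gcd_eq_one, mul_one]
    · trans Nat.gcd (a1 * a2) (a2 * b2)
      · rw [mul_comm, Nat.gcd_mul_left, cop.coprime_mul_right.coprime_mul_left_right.gcd_eq_one,
          mul_one]
      · rw [← hcd.1.1, ← hcd.2.1] at cop
        rw [← hcd.1.1, h.2, mul_comm, Nat.gcd_mul_left,
          cop.coprime_mul_right.coprime_mul_left_right.gcd_eq_one, mul_one]
    · trans Nat.gcd (b1 * b2) (a1 * b1)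
      · rw [mul_comm, Nat.gcd_mul_right,
          cop.coprime_mul_right.coprime_mul_left_right.symm.gcd_eq_one, one_mul]
      · rw [← hcd.1.1, ← hcd.2.1] at cop
        rw [← hcd.2.1, h.1, mul_comm c1 d1, Nat.gcd_mul_left,
          cop.coprime_mul_right.coprime_mul_left_right.symm.gcd_eq_one, mul_one]
    · trans Nat.gcd (b1 * b2) (a2 * b2)
      · rw [Nat.gcd_mul_right, cop.coprime_mul_left.coprime_mul_right_right.symm.gcd_eq_one,
          one_mul]
      · rw [← hcd.1.1, ← hcd.2.1] at cop
        rw [← hcd.2.1, h.2, Nat.gcd_mul_right,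
          cop.coprime_mul_left.coprime_mul_right_right.symm.gcd_eq_one, one_mul]
  · simp only [Set.SurjOn, Set.subset_def, mem_coe, Nat.mem_divisorsAntidiagonal, Ne, mem_product,
      Set.mem_image, exists_prop, Prod.mk.injEq]
    rintro ⟨b1, b2⟩ h
    dsimp at h
    use ((b1.gcd m, b2.gcd m), (b1.gcd n, b2.gcd n))
    rw [← cop.gcd_mul _, ← cop.gcd_mul _, ← h.1, Nat.gcd_mul_gcd_of_coprime_of_mul_eq_mul cop h.1,
      Nat.gcd_mul_gcd_of_coprime_of_mul_eq_mul cop.symm _]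
    · rw [Nat.mul_eq_zero, not_or] at h
      simp [h.2.1, h.2.2]
    rw [mul_comm n m, h.1]
  · rintro ⟨⟨a1, a2⟩, ⟨b1, b2⟩⟩ _
    rfl

private lemma supp_split (g : ArithmeticFunction ℝ)
    (hg : ∀ m : ℕ, ¬ IsPrimePow m → g m = 0) {x y : ℕ} (hx : x ≠ 0) (hy : y ≠ 0)
    (hxy : Nat.Coprime x y) :
    g (x * y) = (if y = 1 then g x else 0) + (if x = 1 then g y else 0) := by
  have h1 : ¬ IsPrimePow 1 := not_isPrimePow_one
  rcases eq_or_ne x 1 with rfl | hx1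
  · rcases eq_or_ne y 1 with rfl | hy1
    · simp [hg 1 h1]
    · simp [hy1]
  · rcases eq_or_ne y 1 with rfl | hy1
    · simp [hx1]
    · simp only [hx1, hy1, if_neg, if_false, add_zero]
      apply hg
      intro hpp
      rcases (hxy.isPrimePow_dvd_mul hpp).mp dvd_rfl with hd | hd
      · have hle := Nat.le_of_dvd (Nat.pos_of_ne_zero hx) hd
        have h2 : 2 ≤ y := by omega
        nlinarith [Nat.pos_of_ne_zero hx]
      · have hle := Nat.le_of_dvd (Nat.pos_of_ne_zero hy) hd
        have h2 : 2 ≤ x := by omega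
        nlinarith [Nat.pos_of_ne_zero hy]

private lemma key {ι : Type*} [DecidableEq ι] (f : ι → ArithmeticFunction ℝ)
    (hf : ∀ i, ∀ m : ℕ, ¬ IsPrimePow m → f i m = 0) (T : Finset ι) :
    ∀ (a b : ℕ), a ≠ 0 → b ≠ 0 → Nat.Coprime a b →
      ((↑(ArithmeticFunction.moebius) : ArithmeticFunction ℝ) * ∏ i ∈ T, f i) (a * b) =
        ∑ S ∈ T.powerset,
          ((↑(ArithmeticFunction.moebius) : ArithmeticFunction ℝ) * ∏ i ∈ S, f i) a *
            ((↑(ArithmeticFunction.moebius) : ArithmeticFunction ℝ) * ∏ i ∈ T \ S, f i) b := by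
  induction T using Finset.induction_on with
  | empty =>
    intro a b ha hb hab
    simp only [Finset.prod_empty, mul_one, Finset.powerset_empty, Finset.sum_singleton,
      Finset.sdiff_empty]
    exact (isMultiplicative_moebius.intCast).map_mul_of_coprime hab
  | insert j T hj ih =>
    intro a b ha hb hab
    have hGprod : ∏ i ∈ insert j T, f i = (∏ i ∈ T, f i) * f j := by
      rw [Finset.prod_insert hj, mul_comm]
    rw [hGprod, ← mul_assoc, mul_apply_of_coprime _ _ hab]
    have hsplit : ∀ p ∈ a.divisorsAntidiagonal ×ˢ b.divisorsAntidiagonal,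
        ((↑(ArithmeticFunction.moebius) : ArithmeticFunction ℝ) * ∏ i ∈ T, f i) (p.1.1 * p.2.1)
            * f j (p.1.2 * p.2.2) =
          (if p.2 = (b, 1) then
            ((↑(ArithmeticFunction.moebius) : ArithmeticFunction ℝ) * ∏ i ∈ T, f i)
              (p.1.1 * b) * f j p.1.2 else 0)
          + (if p.1 = (a, 1) then
            ((↑(ArithmeticFunction.moebius) : ArithmeticFunction ℝ) * ∏ i ∈ T, f i)
              (a * p.2.1) * f j p.2.2 else 0) := by
      rintro ⟨⟨x1, x2⟩, ⟨y1, y2⟩⟩ hp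
      simp only [mem_product, Nat.mem_divisorsAntidiagonal] at hp
      obtain ⟨⟨hxa, ha0⟩, ⟨hyb, hb0⟩⟩ := hp
      have hx2 : x2 ≠ 0 := by rintro rfl; simp at hxa; exact ha (hxa ▸ (mul_zero x1))
      have hy2 : y2 ≠ 0 := by rintro rfl; simp at hyb; exact hb (hyb ▸ (mul_zero y1))
      have hx2a : x2 ∣ a := hxa ▸ dvd_mul_left x2 x1
      have hy2b : y2 ∣ b := hyb ▸ dvd_mul_left y2 y1
      have hcop' : Nat.Coprime x2 y2 :=
        Nat.Coprime.coprime_dvd_right hy2b (Nat.Coprime.coprime_dvd_left hx2a hab)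
      rw [supp_split (f j) (hf j) hx2 hy2 hcop']
      dsimp only
      rw [mul_add]
      congr 1
      · rcases eq_or_ne y2 1 with rfl | hy1
        · have : y1 = b := by simpa using hyb
          subst this
          simp
        · have : (y1, y2) ≠ (b, 1) := by simp [hy1]
          simp [hy1, this]
      · rcases eq_or_ne x2 1 with rfl | hx1
        · have : x1 = a := by simpa using hxa
          subst this
          simp
        · have : (x1, x2) ≠ (a, 1) := by simp [hx1]
          simp [hx1, this]
    rw [Finset.sum_congr rfl hsplit, Finset.sum_add_distrib]
    -- first sum
    have hmemb : ((b, 1) : ℕ × ℕ) ∈ b.divisorsAntidiagonal := by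
      simp [Nat.mem_divisorsAntidiagonal, hb]
    have hmema : ((a, 1) : ℕ × ℕ) ∈ a.divisorsAntidiagonal := by
      simp [Nat.mem_divisorsAntidiagonal, ha]
    rw [Finset.sum_product, Finset.sum_product]
    simp only [Finset.sum_ite_eq' _ ((b, 1) : ℕ × ℕ), hmemb, if_true]
    rw [Finset.sum_comm (s := a.divisorsAntidiagonal) (t := b.divisorsAntidiagonal)]
    simp only [Finset.sum_ite_eq' _ ((a, 1) : ℕ × ℕ), hmema, if_true]
    -- now compute each half
    have e1 : ∑ x ∈ a.divisorsAntidiagonal,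
        ((↑(ArithmeticFunction.moebius) : ArithmeticFunction ℝ) * ∏ i ∈ T, f i) (x.1 * b)
          * f j x.2
        = ∑ S ∈ T.powerset,
            ((↑(ArithmeticFunction.moebius) : ArithmeticFunction ℝ) * ∏ i ∈ insert j S, f i) a *
              ((↑(ArithmeticFunction.moebius) : ArithmeticFunction ℝ) * ∏ i ∈ T \ S, f i) b := by
      have step : ∀ x ∈ a.divisorsAntidiagonal,
          ((↑(ArithmeticFunction.moebius) : ArithmeticFunction ℝ) * ∏ i ∈ T, f i) (x.1 * b)
            * f j x.2
          = ∑ S ∈ T.powerset,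
              (((↑(ArithmeticFunction.moebius) : ArithmeticFunction ℝ) * ∏ i ∈ S, f i) x.1
                * f j x.2) *
              ((↑(ArithmeticFunction.moebius) : ArithmeticFunction ℝ) * ∏ i ∈ T \ S, f i) b := by
        rintro ⟨x1, x2⟩ hx
        simp only [Nat.mem_divisorsAntidiagonal] at hx
        have hx1 : x1 ≠ 0 := by rintro rfl; exact ha (hx.1 ▸ (zero_mul x2))
        have hx1a : x1 ∣ a := hx.1 ▸ dvd_mul_right x1 x2
        have hcop1 : Nat.Coprime x1 b := Nat.Coprime.coprime_dvd_left hx1a hab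
        dsimp only
        rw [ih x1 b hx1 hb hcop1, Finset.sum_mul]
        apply Finset.sum_congr rfl
        intro S _
        ring
      rw [Finset.sum_congr rfl step, Finset.sum_comm]
      apply Finset.sum_congr rfl
      intro S hS
      rw [← Finset.sum_mul]
      congr 1
      have hjS : j ∉ S := fun hmem => hj (Finset.mem_powerset.mp hS hmem)
      have : (↑(ArithmeticFunction.moebius) : ArithmeticFunction ℝ) * ∏ i ∈ insert j S, f i
          = ((↑(ArithmeticFunction.moebius) : ArithmeticFunction ℝ) * ∏ i ∈ S, f i) * f j := by
        rw [Finset.prod_insert hjS, mul_comm (f j), mul_assoc]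
      rw [this, mul_apply]
    have e2 : ∑ y ∈ b.divisorsAntidiagonal,
        ((↑(ArithmeticFunction.moebius) : ArithmeticFunction ℝ) * ∏ i ∈ T, f i) (a * y.1)
          * f j y.2
        = ∑ S ∈ T.powerset,
            ((↑(ArithmeticFunction.moebius) : ArithmeticFunction ℝ) * ∏ i ∈ S, f i) a *
              ((↑(ArithmeticFunction.moebius) : ArithmeticFunction ℝ)
                * ∏ i ∈ insert j (T \ S), f i) b := by
      have step : ∀ y ∈ b.divisorsAntidiagonal,
          ((↑(ArithmeticFunction.moebius) : ArithmeticFunction ℝ) * ∏ i ∈ T, f i) (a * y.1)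
            * f j y.2
          = ∑ S ∈ T.powerset,
              ((↑(ArithmeticFunction.moebius) : ArithmeticFunction ℝ) * ∏ i ∈ S, f i) a *
              (((↑(ArithmeticFunction.moebius) : ArithmeticFunction ℝ) * ∏ i ∈ T \ S, f i) y.1
                * f j y.2) := by
        rintro ⟨y1, y2⟩ hy
        simp only [Nat.mem_divisorsAntidiagonal] at hy
        have hy1 : y1 ≠ 0 := by rintro rfl; exact hb (hy.1 ▸ (zero_mul y2))
        have hy1b : y1 ∣ b := hy.1 ▸ dvd_mul_right y1 y2
        have hcop1 : Nat.Coprime a y1 := Nat.Coprime.coprime_dvd_right hy1b hab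
        dsimp only
        rw [ih a y1 ha hy1 hcop1, Finset.sum_mul]
        apply Finset.sum_congr rfl
        intro S _
        ring
      rw [Finset.sum_congr rfl step, Finset.sum_comm]
      apply Finset.sum_congr rfl
      intro S hS
      rw [← Finset.mul_sum]
      congr 1
      have hjTS : j ∉ T \ S := fun hmem => hj (Finset.mem_sdiff.mp hmem).1
      have : (↑(ArithmeticFunction.moebius) : ArithmeticFunction ℝ) * ∏ i ∈ insert j (T \ S), f i
          = ((↑(ArithmeticFunction.moebius) : ArithmeticFunction ℝ) * ∏ i ∈ T \ S, f i) * f j := by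
        rw [Finset.prod_insert hjTS, mul_comm (f j), mul_assoc]
      rw [this, mul_apply]
    rw [e1, e2, Finset.sum_powerset_insert hj]
    rw [add_comm]
    congr 1
    · apply Finset.sum_congr rfl
      intro S hS
      have hjS : j ∉ S := fun hmem => hj (Finset.mem_powerset.mp hS hmem)
      have hset : insert j (T \ S) = insert j T \ S := by
        ext x
        simp only [Finset.mem_sdiff, Finset.mem_insert]
        have h2 : x = j → x ∉ S := fun h => h ▸ hjS
        tauto
      rw [hset]
    · apply Finset.sum_congr rfl
      intro S hS
      have hjS : j ∉ S := fun hmem => hj (Finset.mem_powerset.mp hS hmem)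
      have hset : insert j T \ insert j S = T \ S := by
        ext x
        simp only [Finset.mem_sdiff, Finset.mem_insert, not_or]
        have h1 : x = j → x ∉ T := fun h => h ▸ hj
        have h2 : x = j → x ∉ S := fun h => h ▸ hjS
        tauto
      rw [hset]

theorem moebius_conv_separation (R : ℕ) (f : Fin R → ArithmeticFunction ℝ)
    (hf : ∀ i : Fin R, ∀ m : ℕ, ¬ IsPrimePow m → f i m = 0)
    (d h n : ℕ) (hd : 0 < d) (hh : 0 < h) (hn : 0 < n)
    (hcop : Nat.Coprime n (d * h)) :
    ((↑(ArithmeticFunction.moebius) : ArithmeticFunction ℝ) * ∏ i : Fin R, f i)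
        (d * h * n) =
      ∑ S : Finset (Fin R),
        ((↑(ArithmeticFunction.moebius) : ArithmeticFunction ℝ) * ∏ i ∈ S, f i)
            (d * h) *
          ((↑(ArithmeticFunction.moebius) : ArithmeticFunction ℝ) * ∏ i ∈ Sᶜ, f i)
            n := by
  have hdh : d * h ≠ 0 := Nat.mul_ne_zero hd.ne' hh.ne'
  have := key f hf (Finset.univ : Finset (Fin R)) (d * h) n hdh hn.ne' hcop.symm
  rw [Finset.powerset_univ] at this
  rw [this]
  apply Finset.sum_congr rfl
  intro S _
  rw [Finset.compl_eq_univ_sdiff]
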